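/- Let 𝕜 be ℝ or ℂ and let A, B, A′, B′ be n×n positive definite Hermitian matrices over 𝕜. Then the characteristic polynomial of √(B⁻¹)·A·√(B⁻¹) equals the characteristic polynomial of √(B′⁻¹)·A′·√(B′⁻¹) if and only if there exists an invertible n×n matrix g over 𝕜 such that g·A·gᴴ = A′ and g·B·gᴴ = B′. In other words, the relative eigenvalues of A with respect to B form a maximal invariant for the simultaneous congruence action on pairs of positive definite matrices. -/

import Mathlib

open Polynomial Matrix

section Aux
variable {R : Type*} [CommRing R] {n : Type*} [DecidableEq n] [Fintype n]

lemma aux_charpoly_conj (P M : Matrix n n R) (hP : IsUnit P.det) :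
    (P * M * P⁻¹).charpoly = M.charpoly := by
  have hPP : P.map (C : R →+* R[X]) * (P⁻¹).map (C : R →+* R[X]) = 1 := by
    rw [← Matrix.map_mul, Matrix.mul_nonsing_inv _ hP]
    exact Matrix.map_one _ (map_zero C) (map_one C)
  have h1 : charmatrix (P * M * P⁻¹) =
      P.map (C : R →+* R[X]) * charmatrix M * (P⁻¹).map (C : R →+* R[X]) := by
    unfold charmatrix
    rw [Matrix.mul_sub, Matrix.sub_mul]
    congr 1
    · rw [mul_assoc, (scalar_commute (X : R[X]) (Commute.all _) _).eq, ← mul_assoc, hPP, one_mul]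
    · simp only [RingHom.mapMatrix_apply, ← Matrix.map_mul]
  rw [Matrix.charpoly, Matrix.charpoly, h1, det_mul, det_mul, mul_comm, ← mul_assoc,
    mul_comm ((P⁻¹).map (C : R →+* R[X])).det, ← det_mul, hPP, det_one, one_mul]

lemma aux_charpoly_diagonal (d : n → R) :
    (diagonal d).charpoly = ∏ i, (X - C (d i)) := by
  have : charmatrix (diagonal d) = diagonal fun i => X - C (d i) := by
    ext i j
    by_cases h : i = j
    · subst h; simp [charmatrix_apply_eq]
    · simp [charmatrix_apply_ne _ _ _ h, diagonal_apply_ne _ h, diagonal_apply_ne' , h]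
  rw [Matrix.charpoly, this, det_diagonal]
end Aux

lemma aux_exists_perm {α : Type*} [LinearOrder α] {k : ℕ} (a b : Fin k → α)
    (h : Finset.univ.val.map a = Finset.univ.val.map b) :
    ∃ σ : Equiv.Perm (Fin k), b = a ∘ σ := by
  have hperm : (List.ofFn a).Perm (List.ofFn b) := by
    rw [Fin.univ_val_map, Fin.univ_val_map] at h
    exact Multiset.coe_eq_coe.mp h
  have h1 : a ∘ Tuple.sort a = b ∘ Tuple.sort b := by
    apply List.ofFn_injective
    exact List.Perm.eq_of_sortedLE (Tuple.monotone_sort a).sortedLE_ofFn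
      (Tuple.monotone_sort b).sortedLE_ofFn
      (((Tuple.sort a).ofFn_comp_perm a).trans (hperm.trans ((Tuple.sort b).ofFn_comp_perm b).symm))
  refine ⟨(Tuple.sort b).symm.trans (Tuple.sort a), ?_⟩
  funext x
  have := congrFun h1 ((Tuple.sort b).symm x)
  simpa using this.symm


section Herm
variable {𝕜 : Type*} [RCLike 𝕜] {k : ℕ}

lemma aux_charpoly_hermitian {M : Matrix (Fin k) (Fin k) 𝕜} (hM : M.IsHermitian) :
    M.charpoly = ∏ i, (Polynomial.X - Polynomial.C ((hM.eigenvalues i : 𝕜))) := by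
  set U : Matrix (Fin k) (Fin k) 𝕜 := (hM.eigenvectorUnitary : Matrix (Fin k) (Fin k) 𝕜) with hU
  have hU1 : star U * U = 1 := (Unitary.mem_iff.mp hM.eigenvectorUnitary.2).1
  have hU2 : U * star U = 1 := (Unitary.mem_iff.mp hM.eigenvectorUnitary.2).2
  have hdet : IsUnit U.det := by
    refine IsUnit.of_mul_eq_one (star U).det ?_
    rw [← det_mul, hU2, det_one]
  have hinv : U⁻¹ = star U := inv_eq_left_inv hU1
  have hspec : M = U * diagonal (RCLike.ofReal ∘ hM.eigenvalues) * U⁻¹ := by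
    rw [hinv]; exact hM.spectral_theorem
  have h1 := aux_charpoly_conj U (diagonal (RCLike.ofReal ∘ hM.eigenvalues)) hdet
  rw [← hspec] at h1
  rw [h1, aux_charpoly_diagonal]
  rfl

lemma aux_unitary_conj {M M' : Matrix (Fin k) (Fin k) 𝕜}
    (hM : M.IsHermitian) (hM' : M'.IsHermitian) (h : M.charpoly = M'.charpoly) :
    ∃ u : Matrix (Fin k) (Fin k) 𝕜, u * uᴴ = 1 ∧ uᴴ * u = 1 ∧ u * M * uᴴ = M' := by
  have hprod : ∏ i, (Polynomial.X - Polynomial.C ((hM.eigenvalues i : 𝕜)))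
      = ∏ i, (Polynomial.X - Polynomial.C ((hM'.eigenvalues i : 𝕜))) := by
    rw [← aux_charpoly_hermitian hM, ← aux_charpoly_hermitian hM', h]
  have hms : Finset.univ.val.map hM.eigenvalues = Finset.univ.val.map hM'.eigenvalues := by
    have h1 : ((Finset.univ.val.map fun i => ((hM.eigenvalues i : 𝕜))).map
          fun r => Polynomial.X - Polynomial.C r).prod
        = ((Finset.univ.val.map fun i => ((hM'.eigenvalues i : 𝕜))).map
          fun r => Polynomial.X - Polynomial.C r).prod := by
      rw [Multiset.map_map, Multiset.map_map]
      exact hprod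
    have h2 : (Finset.univ.val.map fun i => ((hM.eigenvalues i : 𝕜)))
        = Finset.univ.val.map fun i => ((hM'.eigenvalues i : 𝕜)) := by
      have := congrArg Polynomial.roots h1
      rwa [Polynomial.roots_multiset_prod_X_sub_C, Polynomial.roots_multiset_prod_X_sub_C] at this
    have h3 : ((Finset.univ.val.map hM.eigenvalues).map fun r : ℝ => (r : 𝕜))
        = (Finset.univ.val.map hM'.eigenvalues).map fun r : ℝ => (r : 𝕜) := by
      rw [Multiset.map_map, Multiset.map_map]; exact h2
    exact Multiset.map_injective (fun x y => by exact_mod_cast id) h3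
  obtain ⟨σ, hσ⟩ := aux_exists_perm _ _ hms
  set U : Matrix (Fin k) (Fin k) 𝕜 := (hM.eigenvectorUnitary : Matrix (Fin k) (Fin k) 𝕜) with hUdef
  set U' : Matrix (Fin k) (Fin k) 𝕜 :=
    (hM'.eigenvectorUnitary : Matrix (Fin k) (Fin k) 𝕜) with hU'def
  set W : Matrix (Fin k) (Fin k) 𝕜 := U'.submatrix id ⇑σ.symm with hW
  have hU1 : Uᴴ * U = 1 := (Unitary.mem_iff.mp hM.eigenvectorUnitary.2).1
  have hU2 : U * Uᴴ = 1 := (Unitary.mem_iff.mp hM.eigenvectorUnitary.2).2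
  have hU'1 : U'ᴴ * U' = 1 := (Unitary.mem_iff.mp hM'.eigenvectorUnitary.2).1
  have hU'2 : U' * U'ᴴ = 1 := (Unitary.mem_iff.mp hM'.eigenvectorUnitary.2).2
  have hWH : Wᴴ = U'ᴴ.submatrix ⇑σ.symm id := by
    rw [hW, Matrix.conjTranspose_submatrix]
  have hWW : W * Wᴴ = 1 := by
    rw [hW, hWH, Matrix.submatrix_mul_equiv U' U'ᴴ id σ.symm id, hU'2, Matrix.submatrix_id_id]
  have hWW' : Wᴴ * W = 1 := by
    rw [hW, hWH, ← Matrix.submatrix_mul U'ᴴ U' ⇑σ.symm id ⇑σ.symm Function.bijective_id, hU'1,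
      Matrix.submatrix_one_equiv σ.symm]
  have hMdiag : W * diagonal (RCLike.ofReal ∘ hM.eigenvalues) * Wᴴ = M' := by
    have hd : diagonal ((RCLike.ofReal ∘ hM.eigenvalues : Fin k → 𝕜))
        = (diagonal ((RCLike.ofReal ∘ hM'.eigenvalues : Fin k → 𝕜))).submatrix ⇑σ.symm ⇑σ.symm
        := by
      have hfun : ((RCLike.ofReal ∘ hM.eigenvalues : Fin k → 𝕜))
          = (RCLike.ofReal ∘ hM'.eigenvalues : Fin k → 𝕜) ∘ ⇑σ.symm := by
        funext i
        simp [hσ]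
      rw [Matrix.submatrix_diagonal_equiv ((RCLike.ofReal ∘ hM'.eigenvalues : Fin k → 𝕜)) σ.symm,
        hfun]
    rw [hW, hWH, hd,
      Matrix.submatrix_mul_equiv U' (diagonal (RCLike.ofReal ∘ hM'.eigenvalues)) id σ.symm
        ⇑σ.symm,
      Matrix.submatrix_mul_equiv (U' * diagonal (RCLike.ofReal ∘ hM'.eigenvalues)) U'ᴴ id σ.symm
        id, Matrix.submatrix_id_id]
    have := hM'.spectral_theorem
    rw [Unitary.conjStarAlgAut_apply, Matrix.star_eq_conjTranspose] at this
    exact this.symm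
  have hDiag : Uᴴ * M * U = diagonal (RCLike.ofReal ∘ hM.eigenvalues) := by
    conv_lhs => rw [hM.spectral_theorem, Unitary.conjStarAlgAut_apply]
    rw [Matrix.star_eq_conjTranspose]
    simp only [← mul_assoc]
    rw [hU1, one_mul, mul_assoc, hU1, mul_one]
  refine ⟨W * Uᴴ, ?_, ?_, ?_⟩
  · rw [Matrix.conjTranspose_mul, Matrix.conjTranspose_conjTranspose, mul_assoc,
      ← mul_assoc Uᴴ, hU1, one_mul, hWW]
  · rw [Matrix.conjTranspose_mul, Matrix.conjTranspose_conjTranspose, mul_assoc,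
      ← mul_assoc Wᴴ, hWW', one_mul, hU2]
  · rw [Matrix.conjTranspose_mul, Matrix.conjTranspose_conjTranspose]
    have key : W * Uᴴ * M * (U * Wᴴ) = W * (Uᴴ * M * U) * Wᴴ := by
      simp only [mul_assoc]
    rw [key, hDiag, hMdiag]
end Herm


open scoped Matrix ComplexOrder

/-- The square root of a positive semidefinite matrix, as defined in Mathlib (Dec 2024),
since removed from Mathlib. -/
noncomputable def Matrix.PosSemidef.sqrt {n 𝕜 : Type*} [Fintype n] [RCLike 𝕜] [DecidableEq n]
    {A : Matrix n n 𝕜} (hA : A.PosSemidef) : Matrix n n 𝕜 :=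
  hA.1.eigenvectorUnitary.1 * Matrix.diagonal ((↑) ∘ (√·) ∘ hA.1.eigenvalues) *
  (star hA.1.eigenvectorUnitary : Matrix n n 𝕜)

lemma Matrix.PosSemidef.isHermitian_sqrt {n 𝕜 : Type*} [Fintype n] [RCLike 𝕜] [DecidableEq n]
    {A : Matrix n n 𝕜} (hA : A.PosSemidef) : hA.sqrt.IsHermitian := by
  unfold Matrix.PosSemidef.sqrt Matrix.IsHermitian
  rw [Matrix.conjTranspose_mul, Matrix.conjTranspose_mul, Matrix.diagonal_conjTranspose,
    ← Matrix.star_eq_conjTranspose, ← Matrix.star_eq_conjTranspose, star_star, ← mul_assoc]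
  congr 3
  funext i
  simp

lemma Matrix.PosSemidef.sqrt_mul_self {n 𝕜 : Type*} [Fintype n] [RCLike 𝕜] [DecidableEq n]
    {A : Matrix n n 𝕜} (hA : A.PosSemidef) : hA.sqrt * hA.sqrt = A := by
  have hU : (star hA.1.eigenvectorUnitary : Matrix n n 𝕜) * hA.1.eigenvectorUnitary = 1 :=
    Unitary.coe_star_mul_self _
  conv_rhs => rw [hA.1.spectral_theorem, Unitary.conjStarAlgAut_apply]
  unfold Matrix.PosSemidef.sqrt
  simp only [mul_assoc]
  rw [← mul_assoc (star _ : Matrix n n 𝕜) (hA.1.eigenvectorUnitary : Matrix n n 𝕜), hU, one_mul,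
    ← mul_assoc (Matrix.diagonal _), Matrix.diagonal_mul_diagonal]
  congr 3
  funext i
  simp only [Function.comp_apply]
  rw [← RCLike.ofReal_mul, Real.mul_self_sqrt (hA.eigenvalues_nonneg i)]

/-- For positive definite Hermitian matrices `A, B, A', B'` over `𝕜 = ℝ` or `ℂ`, the
characteristic polynomials of `√(B⁻¹)·A·√(B⁻¹)` and `√(B'⁻¹)·A'·√(B'⁻¹)` coincide iff
there exists an invertible `g` with `g·A·gᴴ = A'` and `g·B·gᴴ = B'`: the relative
eigenvalues form a maximal invariant for simultaneous congruence. -/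
theorem charpoly_rel_eig_maximal_invariant {𝕜 : Type*} [RCLike 𝕜] {n : ℕ}
    (A B A' B' : Matrix (Fin n) (Fin n) 𝕜)
    (hA : A.PosDef) (hB : B.PosDef) (hA' : A'.PosDef) (hB' : B'.PosDef) :
    (hB.inv.posSemidef.sqrt * A * hB.inv.posSemidef.sqrt).charpoly =
      (hB'.inv.posSemidef.sqrt * A' * hB'.inv.posSemidef.sqrt).charpoly ↔
    ∃ g : Matrix (Fin n) (Fin n) 𝕜, IsUnit g.det ∧ g * A * gᴴ = A' ∧ g * B * gᴴ = B' := by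
  set S : Matrix (Fin n) (Fin n) 𝕜 := hB.inv.posSemidef.sqrt with hSdef
  set S' : Matrix (Fin n) (Fin n) 𝕜 := hB'.inv.posSemidef.sqrt with hS'def
  have hS : S * S = B⁻¹ := hB.inv.posSemidef.sqrt_mul_self
  have hS' : S' * S' = B'⁻¹ := hB'.inv.posSemidef.sqrt_mul_self
  have hSherm : Sᴴ = S := hB.inv.posSemidef.isHermitian_sqrt
  have hS'herm : S'ᴴ = S' := hB'.inv.posSemidef.isHermitian_sqrt
  have hBdet : IsUnit B.det := (Matrix.isUnit_iff_isUnit_det _).mp hB.isUnit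
  have hB'det : IsUnit B'.det := (Matrix.isUnit_iff_isUnit_det _).mp hB'.isUnit
  have hBidet : IsUnit B⁻¹.det := (Matrix.isUnit_iff_isUnit_det _).mp hB.inv.isUnit
  have hB'idet : IsUnit B'⁻¹.det := (Matrix.isUnit_iff_isUnit_det _).mp hB'.inv.isUnit
  have hSdet : IsUnit S.det := by
    have : S.det * S.det = B⁻¹.det := by rw [← det_mul, hS]
    exact isUnit_of_mul_isUnit_left (this ▸ hBidet)
  have hS'det : IsUnit S'.det := by
    have : S'.det * S'.det = B'⁻¹.det := by rw [← det_mul, hS']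
    exact isUnit_of_mul_isUnit_left (this ▸ hB'idet)
  -- commutation and cancellation facts
  have hSB : S * B * S = 1 := by
    have h1 : S * B⁻¹ = B⁻¹ * S := by rw [← hS, mul_assoc, ← mul_assoc]
    have h2 : S * B = B * S := by
      calc S * B = B * (B⁻¹ * S) * B := by
            rw [← mul_assoc, Matrix.mul_nonsing_inv _ hBdet, one_mul]
        _ = B * (S * B⁻¹) * B := by rw [← h1]
        _ = B * S := by rw [mul_assoc, mul_assoc, Matrix.nonsing_inv_mul _ hBdet, mul_one]
    rw [h2, mul_assoc, hS, Matrix.mul_nonsing_inv _ hBdet]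
  have hS'B' : S' * B' * S' = 1 := by
    have h1 : S' * B'⁻¹ = B'⁻¹ * S' := by rw [← hS', mul_assoc, ← mul_assoc]
    have h2 : S' * B' = B' * S' := by
      calc S' * B' = B' * (B'⁻¹ * S') * B' := by
            rw [← mul_assoc, Matrix.mul_nonsing_inv _ hB'det, one_mul]
        _ = B' * (S' * B'⁻¹) * B' := by rw [← h1]
        _ = B' * S' := by rw [mul_assoc, mul_assoc, Matrix.nonsing_inv_mul _ hB'det, mul_one]
    rw [h2, mul_assoc, hS', Matrix.mul_nonsing_inv _ hB'det]
  have hMherm : (S * A * S).IsHermitian := by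
    have : (S * A * S)ᴴ = S * A * S := by
      rw [Matrix.conjTranspose_mul, Matrix.conjTranspose_mul, hSherm, hA.isHermitian.eq,
        ← mul_assoc]
    exact this
  have hM'herm : (S' * A' * S').IsHermitian := by
    have : (S' * A' * S')ᴴ = S' * A' * S' := by
      rw [Matrix.conjTranspose_mul, Matrix.conjTranspose_mul, hS'herm, hA'.isHermitian.eq,
        ← mul_assoc]
    exact this
  constructor
  · -- eigenvalues equal → congruence
    intro h
    obtain ⟨u, hu1, hu2, hu3⟩ := aux_unitary_conj hMherm hM'herm h
    have hudet : IsUnit u.det :=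
      IsUnit.of_mul_eq_one uᴴ.det (by rw [← det_mul, hu1, det_one])
    refine ⟨B' * S' * u * S, ?_, ?_, ?_⟩
    · simp only [det_mul]
      exact ((hB'det.mul hS'det).mul hudet).mul hSdet
    · -- g A gᴴ = A'
      have hgH : (B' * S' * u * S)ᴴ = S * (uᴴ * (S' * B')) := by
        simp only [Matrix.conjTranspose_mul, hSherm, hS'herm, hB'.isHermitian.eq, mul_assoc]
      rw [hgH]
      have huM : u * (S * A * S) = S' * A' * S' * u := by
        have := congrArg (fun X => X * u) hu3
        simpa [mul_assoc, hu2] using this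
      have huMX : ∀ X, u * (S * (A * (S * X))) = S' * (A' * (S' * (u * X))) := by
        intro X
        have h1 : u * (S * (A * (S * X))) = (u * (S * A * S)) * X := by simp only [mul_assoc]
        rw [h1, huM]
        simp only [mul_assoc]
      have hcu : ∀ X, u * (uᴴ * X) = X := fun X => by rw [← mul_assoc, hu1, one_mul]
      have hfS' : ∀ X, S' * (S' * X) = B'⁻¹ * X := fun X => by rw [← mul_assoc, hS']
      simp only [mul_assoc]
      rw [huMX, hcu, hfS', ← mul_assoc B', Matrix.mul_nonsing_inv _ hB'det, one_mul, hfS',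
        ← mul_assoc, mul_assoc, Matrix.nonsing_inv_mul _ hB'det, mul_one]
    · -- g B gᴴ = B'
      have hgH : (B' * S' * u * S)ᴴ = S * (uᴴ * (S' * B')) := by
        simp only [Matrix.conjTranspose_mul, hSherm, hS'herm, hB'.isHermitian.eq, mul_assoc]
      rw [hgH]
      have hfSB : ∀ X, S * (B * (S * X)) = X := fun X => by
        rw [← mul_assoc, ← mul_assoc, hSB, one_mul]
      have hcu : ∀ X, u * (uᴴ * X) = X := fun X => by rw [← mul_assoc, hu1, one_mul]
      have hfS' : ∀ X, S' * (S' * X) = B'⁻¹ * X := fun X => by rw [← mul_assoc, hS']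
      simp only [mul_assoc]
      rw [hfSB, hcu, hfS', ← mul_assoc, Matrix.mul_nonsing_inv _ hB'det, one_mul]
  · -- congruence → eigenvalues equal
    rintro ⟨g, hg, hgA, hgB⟩
    have hgHdet : IsUnit gᴴ.det := by
      rw [Matrix.det_conjTranspose]
      exact hg.star
    set P : Matrix (Fin n) (Fin n) 𝕜 := S' * g * B * S with hP
    have hPdet : IsUnit P.det := by
      simp only [hP, det_mul]
      exact ((hS'det.mul hg).mul hBdet).mul hSdet
    have claim : P * (S * A * S) = (S' * A' * S') * P := by
      have hB'inv : B'⁻¹ = gᴴ⁻¹ * (B⁻¹ * g⁻¹) := by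
        rw [← hgB, Matrix.mul_inv_rev, Matrix.mul_inv_rev]
      have hfS : ∀ X, S * (S * X) = B⁻¹ * X := fun X => by rw [← mul_assoc, hS]
      have hfS' : ∀ X, S' * (S' * X) = B'⁻¹ * X := fun X => by rw [← mul_assoc, hS']
      have hcB : ∀ X, B * (B⁻¹ * X) = X := fun X => by
        rw [← mul_assoc, Matrix.mul_nonsing_inv _ hBdet, one_mul]
      have hcBi : ∀ X, B⁻¹ * (B * X) = X := fun X => by
        rw [← mul_assoc, Matrix.nonsing_inv_mul _ hBdet, one_mul]
      have hcgH : ∀ X, gᴴ * (gᴴ⁻¹ * X) = X := fun X => by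
        rw [← mul_assoc, Matrix.mul_nonsing_inv _ hgHdet, one_mul]
      have hcgi : ∀ X, g⁻¹ * (g * X) = X := fun X => by
        rw [← mul_assoc, Matrix.nonsing_inv_mul _ hg, one_mul]
      rw [hP, ← hgA]
      simp only [mul_assoc]
      rw [hfS, hcB, hfS', hB'inv]
      simp only [mul_assoc]
      rw [hcgH, hcgi, hcBi]
    have hconj : P * (S * A * S) * P⁻¹ = S' * A' * S' := by
      rw [claim, mul_assoc, Matrix.mul_nonsing_inv _ hPdet, mul_one]
    have := aux_charpoly_conj P (S * A * S) hPdet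
    rw [hconj] at this
    exact this.symm
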